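/- For any pair of disjoint subsets I, J of {1, …, r} with I ∪ J = {1, …, r}, the family {α_i^∨ : i ∈ I} ∪ {x_j : j ∈ J} is a basis of the dual space V^*. -/

import Mathlib

/-- Let `b i` be the simple roots (a basis of `V`), `coroot i` the simple
coroots in the dual space, forming a crystallographic Cartan matrix, with a finite root
system `Φ` containing the simple roots and closed under the simple reflections, and let
`x j` be the fundamental coweights.  For any pair of disjoint subsets `I, J` of `{1, …, r}`
with `I ∪ J = {1, …, r}`, the family `{coroot i : i ∈ I} ∪ {x j : j ∈ J}` is a basis of the
dual space `V^*`. -/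
theorem stmt_0 {V : Type*} [AddCommGroup V] [Module ℚ V] {r : ℕ}
    (b : Module.Basis (Fin r) ℚ V) (coroot : Fin r → Module.Dual ℚ V)
    (hdiag : ∀ i, coroot i (b i) = 2)
    (hoff : ∀ i j : Fin r, i ≠ j → coroot j (b i) ≤ 0)
    (hint : ∀ i j : Fin r, ∃ n : ℤ, coroot j (b i) = (n : ℚ))
    (Φ : Set V) (hΦfin : Φ.Finite) (hΦroot : ∀ i, b i ∈ Φ)
    (hΦrefl : ∀ β ∈ Φ, ∀ i, β - coroot i β • b i ∈ Φ)
    (x : Fin r → Module.Dual ℚ V)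
    (hx : ∀ i j : Fin r, x j (b i) = if i = j then 1 else 0)
    (I J : Finset (Fin r)) (hdisj : Disjoint I J) (hcover : I ∪ J = Finset.univ) :
    ∃ d : Module.Basis (Fin r) ℚ (Module.Dual ℚ V),
      ∀ k : Fin r, d k = if k ∈ I then coroot k else x k := by
  classical
  set s : Fin r → (V ≃ₗ[ℚ] V) := fun i => Module.reflection (hdiag i) with hs
  set W : Subgroup (V ≃ₗ[ℚ] V) := Subgroup.closure (Set.range s) with hWdef
  -- every element of W preserves Φ
  have hstab : ∀ g ∈ W, (∀ v ∈ Φ, g v ∈ Φ) ∧ (∀ v ∈ Φ, g⁻¹ v ∈ Φ) := by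
    intro g hg
    induction hg using Subgroup.closure_induction with
    | mem g hg =>
      obtain ⟨i, rfl⟩ := hg
      have h1 : ∀ v ∈ Φ, s i v ∈ Φ := by
        intro v hv
        simpa [hs, Module.reflection_apply] using hΦrefl v hv i
      refine ⟨h1, ?_⟩
      have hinv : (s i)⁻¹ = s i := by
        show (s i).symm = s i
        simp [hs]
      rw [hinv]; exact h1
    | one => simp
    | mul g h hg hh ihg ihh =>
      refine ⟨fun v hv => ihg.1 _ (ihh.1 v hv), fun v hv => ?_⟩
      show (g * h).symm v ∈ Φ
      have : (g * h).symm v = h.symm (g.symm v) := rfl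
      rw [this]
      exact ihh.2 _ (ihg.2 v hv)
    | inv g hg ihg =>
      refine ⟨ihg.2, ?_⟩
      simpa using ihg.1
  -- Φ spans V
  have hspan : Submodule.span ℚ Φ = ⊤ := by
    refine top_le_iff.mp ?_
    rw [← b.span_eq]
    exact Submodule.span_mono (by rintro v ⟨i, rfl⟩; exact hΦroot i)
  -- W is finite
  haveI := hΦfin.to_subtype
  haveI : Finite W := by
    refine Finite.of_injective
      (fun g : W => (fun v : Φ => (⟨g.1 v.1, (hstab g.1 g.2).1 v.1 v.2⟩ : Φ))) ?_
    intro g h hgh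
    have heq : ∀ v ∈ Φ, g.1 v = h.1 v := by
      intro v hv
      exact congrArg Subtype.val (congrFun hgh ⟨v, hv⟩)
    have : (g.1 : V →ₗ[ℚ] V) = (h.1 : V →ₗ[ℚ] V) := LinearMap.ext_on hspan heq
    exact Subtype.ext (LinearEquiv.toLinearMap_injective this)
  haveI : Fintype W := Fintype.ofFinite _
  -- base positive definite form
  set B₀ : V →ₗ[ℚ] V →ₗ[ℚ] ℚ :=
    ∑ i : Fin r, (b.coord i).smulRight (b.coord i) with hB0
  have hB0apply : ∀ u w, B₀ u w = ∑ i : Fin r, b.repr u i * b.repr w i := by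
    intro u w
    simp [hB0, Module.Basis.coord_apply]
  have hB0pos : ∀ v : V, v ≠ 0 → 0 < B₀ v v := by
    intro v hv
    rw [hB0apply]
    refine Finset.sum_pos' (fun i _ => mul_self_nonneg _) ?_
    have : b.repr v ≠ 0 := by simpa using hv
    obtain ⟨i, hi⟩ := Finsupp.ne_iff.mp this
    exact ⟨i, Finset.mem_univ i, mul_self_pos.mpr (by simpa using hi)⟩
  have hB0nonneg : ∀ v : V, 0 ≤ B₀ v v := by
    intro v
    rw [hB0apply]
    exact Finset.sum_nonneg fun i _ => mul_self_nonneg _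
  -- averaged, W-invariant positive definite form
  set B : V →ₗ[ℚ] V →ₗ[ℚ] ℚ :=
    ∑ g : W, B₀.compl₁₂ (g.1 : V →ₗ[ℚ] V) (g.1 : V →ₗ[ℚ] V) with hBdef
  have hBapply : ∀ u w, B u w = ∑ g : W, B₀ (g.1 u) (g.1 w) := by
    intro u w
    simp [hBdef]
  have hBpos : ∀ v : V, v ≠ 0 → 0 < B v v := by
    intro v hv
    rw [hBapply]
    refine Finset.sum_pos' (fun g _ => hB0nonneg _) ?_
    exact ⟨⟨1, one_mem W⟩, Finset.mem_univ _, by simpa using hB0pos v hv⟩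
  have hBinv : ∀ h ∈ W, ∀ u w, B (h u) (h w) = B u w := by
    intro h hh u w
    rw [hBapply, hBapply]
    exact Fintype.sum_equiv (Equiv.mulRight (⟨h, hh⟩ : W)) _ _ (fun g => rfl)
  -- the key formula relating coroots and B
  have hkey : ∀ (k : Fin r) (u : V),
      coroot k u * B (b k) (b k) = 2 * B u (b k) := by
    intro k u
    have h1 := hBinv (s k) (Subgroup.subset_closure ⟨k, rfl⟩) u (b k)
    have e1 : (s k) (b k) = -(b k) := by simp [hs]
    have e2 : (s k) u = u - coroot k u • b k := by simp [hs, Module.reflection_apply]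
    rw [e1, e2] at h1
    simp only [map_sub, map_neg, map_smul, LinearMap.sub_apply, LinearMap.neg_apply,
      LinearMap.smul_apply, smul_eq_mul] at h1
    linarith [h1]
  have hBdiagpos : ∀ k, 0 < B (b k) (b k) := fun k => hBpos _ (b.ne_zero k)
  -- linear independence of the candidate family
  set f : Fin r → Module.Dual ℚ V := fun k => if k ∈ I then coroot k else x k with hf
  have hli : LinearIndependent ℚ f := by
    rw [Fintype.linearIndependent_iff]
    intro c hcsum
    have heval : ∀ v : V, ∑ k : Fin r, c k * (f k) v = 0 := by
      intro v
      have := congrArg (fun φ : Module.Dual ℚ V => φ v) hcsum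
      simpa using this
    -- the coefficients over I vanish
    have hI0 : ∀ k ∈ I, c k = 0 := by
      have hIzero : ∀ i ∈ I, ∑ k ∈ I, c k * coroot k (b i) = 0 := by
        intro i hi
        have h0 := heval (b i)
        rw [← Finset.sum_subset (Finset.subset_univ I) (by
          intro k _ hk
          have hik : i ≠ k := fun h => hk (h ▸ hi)
          simp [hf, hk, hx, hik])] at h0
        refine Eq.trans (Finset.sum_congr rfl ?_) h0
        intro k hk
        simp [hf, hk]
      set d : Fin r → ℚ := fun k => if k ∈ I then c k / B (b k) (b k) else 0 with hd
      set w : V := ∑ k : Fin r, d k • b k with hw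
      have hBiw : ∀ i ∈ I, B (b i) w = 0 := by
        intro i hi
        rw [hw, map_sum]
        have hterm : ∀ k : Fin r,
            B (b i) (d k • b k) = d k * (coroot k (b i) * B (b k) (b k)) / 2 := by
          intro k
          rw [map_smul, smul_eq_mul, hkey k (b i)]
          ring
        rw [Finset.sum_congr rfl (fun k _ => hterm k),
            ← Finset.sum_subset (Finset.subset_univ I) (by
          intro k _ hk
          simp [hd, hk])]
        have : ∀ k ∈ I, d k * (coroot k (b i) * B (b k) (b k)) / 2
            = c k * coroot k (b i) / 2 := by
          intro k hk
          have hne := ne_of_gt (hBdiagpos k)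
          rw [hd]
          simp only [hk, if_true]
          field_simp
        rw [Finset.sum_congr rfl this, ← Finset.sum_div, hIzero i hi, zero_div]
      have hww : B w w = 0 := by
        have h1 : B w = ∑ k ∈ I, d k • B (b k) := by
          rw [hw, map_sum, ← Finset.sum_subset (Finset.subset_univ I) (by
            intro k _ hk
            simp [hd, hk])]
          exact Finset.sum_congr rfl fun k _ => map_smul _ _ _
        calc B w w = (∑ k ∈ I, d k • B (b k)) w := by rw [h1]
          _ = ∑ k ∈ I, d k * B (b k) w := by
              rw [LinearMap.sum_apply]
              exact Finset.sum_congr rfl fun k _ => rfl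
          _ = 0 := Finset.sum_eq_zero fun i hi => by rw [hBiw i hi, mul_zero]
      have hw0 : w = 0 := by
        by_contra hne
        exact absurd hww (ne_of_gt (hBpos w hne))
      have hd0 : ∀ k, d k = 0 := by
        exact Fintype.linearIndependent_iff.mp b.linearIndependent d (by rw [← hw]; exact hw0)
      intro k hk
      have := hd0 k
      rw [hd] at this
      simp only [hk, if_true] at this
      exact (div_eq_zero_iff.mp this).resolve_right (ne_of_gt (hBdiagpos k))
    -- the coefficients over J vanish
    intro k
    by_cases hk : k ∈ I
    · exact hI0 k hk
    · have h0 := heval (b k)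
      rw [Finset.sum_eq_single k (by
        intro m _ hmk
        by_cases hm : m ∈ I
        · rw [hI0 m hm, zero_mul]
        · simp [hf, hm, hx, hmk.symm]) (by simp)] at h0
      simpa [hf, hk, hx] using h0
  -- conclude: a linearly independent family of the right cardinality is a basis
  haveI : FiniteDimensional ℚ V := Module.Finite.of_basis b
  have hcard : Fintype.card (Fin r) = Module.finrank ℚ (Module.Dual ℚ V) := by
    rw [Subspace.dual_finrank_eq, Module.finrank_eq_card_basis b]
  refine ⟨Module.Basis.mk hli (hli.span_eq_top_of_card_eq_finrank' hcard).ge, ?_⟩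
  intro k
  rw [Module.Basis.mk_apply]
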